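/- arXiv:1510.03822 — 3 statements merged into one kernel-verified Lean document; each statement's English description precedes it below -/
import Mathlib

section
/- The function S ↦ |R_G(S) ∪ N_out(R_G(S))| is submodular: for M ⊆ N ⊆ V and v ∉ N, |C_G(M ∪ {v})| − |C_G(M)| ≥ |C_G(N ∪ {v})| − |C_G(N)|, where C_G(S) = R_G(S) ∪ N_out(R_G(S)). -/
open scoped Classical

/-- The set of vertices of a finite directed graph `E` reachable by a directed
path from some vertex of `S`. -/
noncomputable def reachSet {V : Type*} [Fintype V] (E : V → V → Prop) (S : Finset V) : Finset V :=
  Finset.univ.filter (fun u => ∃ s ∈ S, Relation.ReflTransGen E s u)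

/-- The set of out-neighbors of vertices of `A`. -/
noncomputable def noutSet {V : Type*} [Fintype V] (E : V → V → Prop) (A : Finset V) : Finset V :=
  Finset.univ.filter (fun w => ∃ a ∈ A, E a w)

/-- The covered set: reachable vertices together with their out-neighbors. -/
noncomputable def covSet {V : Type*} [Fintype V] (E : V → V → Prop) (S : Finset V) : Finset V :=
  reachSet E S ∪ noutSet E (reachSet E S)

theorem cov_card_submodular {V : Type*} [Fintype V] (E : V → V → Prop)
    (M N : Finset V) (v : V) (hMN : M ⊆ N) (hv : v ∉ N) :
    ((covSet E (N ∪ {v})).card : ℝ) - (covSet E N).card ≤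
      ((covSet E (M ∪ {v})).card : ℝ) - (covSet E M).card := by
  have hcov : ∀ A B : Finset V, covSet E (A ∪ B) = covSet E A ∪ covSet E B := by
    intro A B
    have hr : reachSet E (A ∪ B) = reachSet E A ∪ reachSet E B := by
      ext u
      simp only [reachSet, Finset.mem_filter, Finset.mem_union, Finset.mem_univ, true_and]
      constructor
      · rintro ⟨s, hs | hs, h⟩
        · exact Or.inl ⟨s, hs, h⟩
        · exact Or.inr ⟨s, hs, h⟩
      · rintro (⟨s, hs, h⟩ | ⟨s, hs, h⟩)
        · exact ⟨s, Or.inl hs, h⟩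
        · exact ⟨s, Or.inr hs, h⟩
    have hn : ∀ A B : Finset V, noutSet E (A ∪ B) = noutSet E A ∪ noutSet E B := by
      intro A B
      ext u
      simp only [noutSet, Finset.mem_filter, Finset.mem_union, Finset.mem_univ, true_and]
      constructor
      · rintro ⟨s, hs | hs, h⟩
        · exact Or.inl ⟨s, hs, h⟩
        · exact Or.inr ⟨s, hs, h⟩
      · rintro (⟨s, hs, h⟩ | ⟨s, hs, h⟩)
        · exact ⟨s, Or.inl hs, h⟩
        · exact ⟨s, Or.inr hs, h⟩
    simp only [covSet, hr, hn]
    ac_rfl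
  set C := covSet E {v} with hC
  have hmono : covSet E M ⊆ covSet E N := by
    have : N = M ∪ N := by
      ext x; simp only [Finset.mem_union]
      exact ⟨Or.inr, fun h => h.elim (fun h => hMN h) id⟩
    rw [this, hcov]
    exact Finset.subset_union_left
  have key : ∀ A : Finset V,
      ((covSet E (A ∪ {v})).card : ℝ) - (covSet E A).card = ((C \ covSet E A).card : ℝ) := by
    intro A
    rw [hcov]
    have := Finset.card_sdiff_add_card (s := C) (t := covSet E A)
    have h2 : (covSet E A ∪ C) = C ∪ covSet E A := Finset.union_comm _ _
    rw [h2, ← this]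
    push_cast
    ring
  rw [key M, key N]
  exact_mod_cast Finset.card_le_card
    (Finset.sdiff_subset_sdiff (Finset.Subset.refl C) hmono)
end

section
/- For a monotone submodular function f with f(∅) = 0, the greedy algorithm that iteratively adds the element with maximum marginal gain produces, after k steps, a set S_k with f(S_k) ≥ (1 − (1 − 1/k)^k)·max_{|T|=k} f(T) ≥ (1 − 1/e)·max_{|T|=k} f(T). -/
open scoped Classical

theorem greedy_approximation {V : Type*} [Fintype V] (k : ℕ) (hk : 0 < k)
    (hcard : k ≤ Fintype.card V)
    (f : Finset V → ℝ)
    (hmono : ∀ M N : Finset V, M ⊆ N → f M ≤ f N)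
    (hsub : ∀ M N : Finset V, ∀ v : V, M ⊆ N → v ∉ N →
      f (N ∪ {v}) - f N ≤ f (M ∪ {v}) - f M)
    (hempty : f ∅ = 0)
    (S : ℕ → Finset V) (hS0 : S 0 = ∅)
    (hgreedy : ∀ i < k, ∃ v ∉ S i,
      S (i + 1) = S i ∪ {v} ∧
        ∀ w ∉ S i, f (S i ∪ {w}) - f (S i) ≤ f (S i ∪ {v}) - f (S i)) :
    ∀ T : Finset V, T.card = k →
      (1 - (1 : ℝ) / Real.exp 1) * f T ≤ (1 - (1 - 1 / (k : ℝ)) ^ k) * f T ∧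
        (1 - (1 - 1 / (k : ℝ)) ^ k) * f T ≤ f (S k) := by
  intro T hT
  have hk1 : (1:ℝ) ≤ (k:ℝ) := by exact_mod_cast hk
  have hkpos : (0:ℝ) < (k:ℝ) := by linarith
  have hq0 : (0:ℝ) ≤ 1 - 1/(k:ℝ) := by
    have : (1:ℝ)/(k:ℝ) ≤ 1 := by
      rw [div_le_one hkpos]; exact hk1
    linarith
  have hfT0 : 0 ≤ f T := by
    have := hmono ∅ T (Finset.empty_subset T)
    rwa [hempty] at this
  -- subadditivity of marginal gains
  have key : ∀ B A : Finset V, (∀ v ∈ B, v ∉ A) →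
      f (A ∪ B) ≤ f A + ∑ v ∈ B, (f (A ∪ {v}) - f A) := by
    intro B
    induction B using Finset.induction_on with
    | empty => intro A _; simp
    | @insert v B hvB ih =>
      intro A hAB
      have hvA : v ∉ A := hAB v (Finset.mem_insert_self v B)
      have hvAB : v ∉ A ∪ B := by
        simp only [Finset.mem_union, not_or]
        exact ⟨hvA, hvB⟩
      have h1 : f ((A ∪ B) ∪ {v}) - f (A ∪ B) ≤ f (A ∪ {v}) - f A :=
        hsub A (A ∪ B) v Finset.subset_union_left hvAB
      have h2 := ih A (fun w hw => hAB w (Finset.mem_insert_of_mem hw))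
      have heq : A ∪ insert v B = (A ∪ B) ∪ {v} := by
        ext x; simp [Finset.mem_insert, Finset.mem_union]
      rw [heq, Finset.sum_insert hvB]
      linarith
  -- the step inequality
  have step : ∀ i < k, f T - f (S (i+1)) ≤ (1 - 1/(k:ℝ)) * (f T - f (S i)) := by
    intro i hi
    obtain ⟨v, hv, hSeq, hmax⟩ := hgreedy i hi
    set g : ℝ := f (S i ∪ {v}) - f (S i) with hg
    have hg0 : 0 ≤ g := by
      have := hmono (S i) (S i ∪ {v}) Finset.subset_union_left
      rw [hg]; linarith
    have hsum := key (T \ S i) (S i) (fun w hw => (Finset.mem_sdiff.mp hw).2)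
    have hcardle : ((T \ S i).card : ℝ) ≤ (k:ℝ) := by
      have : (T \ S i).card ≤ T.card := Finset.card_le_card (Finset.sdiff_subset)
      rw [hT] at this; exact_mod_cast this
    have hsumle : ∑ w ∈ T \ S i, (f (S i ∪ {w}) - f (S i)) ≤ (k:ℝ) * g := by
      calc ∑ w ∈ T \ S i, (f (S i ∪ {w}) - f (S i))
          ≤ ∑ _w ∈ T \ S i, g := by
            apply Finset.sum_le_sum
            intro w hw
            exact hmax w (Finset.mem_sdiff.mp hw).2
        _ = ((T \ S i).card : ℝ) * g := by rw [Finset.sum_const, nsmul_eq_mul]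
        _ ≤ (k:ℝ) * g := mul_le_mul_of_nonneg_right hcardle hg0
    have hunion : S i ∪ (T \ S i) = S i ∪ T := Finset.union_sdiff_self_eq_union
    have hTle : f T ≤ f (S i) + (k:ℝ) * g := by
      have h1 : f T ≤ f (S i ∪ T) := hmono T _ Finset.subset_union_right
      rw [← hunion] at h1
      linarith
    have hgeq : g = f (S (i+1)) - f (S i) := by rw [hSeq]
    have hdiv : (f T - f (S i)) / (k:ℝ) ≤ g := by
      rw [div_le_iff₀ hkpos]
      nlinarith
    have : (1 - 1/(k:ℝ)) * (f T - f (S i)) = (f T - f (S i)) - (f T - f (S i))/(k:ℝ) := by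
      field_simp
    rw [this]
    linarith
  -- iterate
  have main : ∀ i ≤ k, f T - f (S i) ≤ (1 - 1/(k:ℝ))^i * f T := by
    intro i
    induction i with
    | zero => intro _; simp [hS0, hempty]
    | succ n ih =>
      intro hn
      have hnk : n < k := hn
      have h1 := step n hnk
      have h2 := ih (Nat.le_of_lt hnk)
      calc f T - f (S (n+1)) ≤ (1 - 1/(k:ℝ)) * (f T - f (S n)) := h1
        _ ≤ (1 - 1/(k:ℝ)) * ((1 - 1/(k:ℝ))^n * f T) :=
            mul_le_mul_of_nonneg_left h2 hq0
        _ = (1 - 1/(k:ℝ))^(n+1) * f T := by ring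
  have hfinal : (1 - (1 - 1/(k:ℝ))^k) * f T ≤ f (S k) := by
    have := main k le_rfl
    nlinarith
  refine ⟨?_, hfinal⟩
  -- (1-1/k)^k ≤ 1/e
  have hexp : (1 - 1/(k:ℝ))^k ≤ 1 / Real.exp 1 := by
    have h1 : 1 - 1/(k:ℝ) ≤ Real.exp (-(1/(k:ℝ))) := by
      have := Real.add_one_le_exp (-(1/(k:ℝ)))
      linarith
    have h2 : (1 - 1/(k:ℝ))^k ≤ (Real.exp (-(1/(k:ℝ))))^k :=
      pow_le_pow_left₀ hq0 h1 k
    have h3 : (Real.exp (-(1/(k:ℝ))))^k = Real.exp (-1) := by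
      rw [← Real.exp_nat_mul]
      congr 1
      field_simp
    rw [h3, Real.exp_neg] at h2
    simpa [one_div] using h2
  have := mul_le_mul_of_nonneg_right (sub_le_sub_left hexp 1) hfT0
  linarith [this]
end

section
/- Key lemma for the greedy approximation guarantee: if f is monotone and submodular, then for any sets S and T, f(T) ≤ f(S) + Σ_{v ∈ T \ S} (f(S ∪ {v}) − f(S)). In particular, if |T| = k, some element v ∈ T \ S has marginal gain at least (f(T) − f(S))/k. -/
open scoped Classical

theorem submodular_key_lemma {V : Type*} [Fintype V] (f : Finset V → ℝ)
    (hmono : ∀ M N : Finset V, M ⊆ N → f M ≤ f N)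
    (hsub : ∀ M N : Finset V, ∀ v : V, M ⊆ N → v ∉ N →
      f (N ∪ {v}) - f N ≤ f (M ∪ {v}) - f M) :
    ∀ S T : Finset V,
      (f T ≤ f S + ∑ v ∈ T \ S, (f (S ∪ {v}) - f S)) ∧
        (∀ k : ℕ, T.card = k → (T \ S).Nonempty →
          ∃ v ∈ T \ S, (f T - f S) / (k : ℝ) ≤ f (S ∪ {v}) - f S) := by
  have aux : ∀ D S : Finset V, Disjoint S D →
      f (S ∪ D) ≤ f S + ∑ v ∈ D, (f (S ∪ {v}) - f S) := by
    intro D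
    induction D using Finset.induction with
    | empty => intro S _; simp
    | insert _ _ ha =>
      rename_i a D' ih
      intro S hdisj
      have haS : a ∉ S := fun h => Finset.disjoint_left.mp hdisj h (Finset.mem_insert_self a D')
      have hdisj' : Disjoint (S ∪ {a}) D' := by
        rw [Finset.disjoint_union_left]
        constructor
        · exact Finset.disjoint_of_subset_right (Finset.subset_insert a D') hdisj
        · simp [Finset.disjoint_left, ha]
      have hset : S ∪ insert a D' = (S ∪ {a}) ∪ D' := by
        ext x; simp [Finset.mem_insert, Finset.mem_union]
      have h1 : f ((S ∪ {a}) ∪ D') ≤ f (S ∪ {a}) + ∑ v ∈ D', (f ((S ∪ {a}) ∪ {v}) - f (S ∪ {a})) :=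
        ih (S ∪ {a}) hdisj'
      have h2 : ∑ v ∈ D', (f ((S ∪ {a}) ∪ {v}) - f (S ∪ {a})) ≤
          ∑ v ∈ D', (f (S ∪ {v}) - f S) := by
        apply Finset.sum_le_sum
        intro v hv
        have hvS : v ∉ S := fun h =>
          Finset.disjoint_left.mp hdisj h (Finset.mem_insert_of_mem hv)
        have hva : v ≠ a := fun h => ha (h ▸ hv)
        exact hsub S (S ∪ {a}) v Finset.subset_union_left (by simp [hvS, hva])
      rw [hset, Finset.sum_insert ha]
      calc f ((S ∪ {a}) ∪ D') ≤ f (S ∪ {a}) + ∑ v ∈ D', (f ((S ∪ {a}) ∪ {v}) - f (S ∪ {a})) := h1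
        _ ≤ f (S ∪ {a}) + ∑ v ∈ D', (f (S ∪ {v}) - f S) := by linarith
        _ = f S + ((f (S ∪ {a}) - f S) + ∑ v ∈ D', (f (S ∪ {v}) - f S)) := by ring
  intro S T
  have hdisj : Disjoint S (T \ S) := Finset.disjoint_sdiff
  have hkey : f T ≤ f S + ∑ v ∈ T \ S, (f (S ∪ {v}) - f S) := by
    calc f T ≤ f (S ∪ (T \ S)) := hmono _ _ (by intro x hx; simp [Finset.mem_union, Finset.mem_sdiff]; tauto)
      _ ≤ f S + ∑ v ∈ T \ S, (f (S ∪ {v}) - f S) := aux (T \ S) S hdisj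
  refine ⟨hkey, ?_⟩
  intro k hk hne
  obtain ⟨v, hv, hmax⟩ := Finset.exists_max_image (T \ S) (fun v => f (S ∪ {v}) - f S) hne
  refine ⟨v, hv, ?_⟩
  have hgv0 : 0 ≤ f (S ∪ {v}) - f S := by
    have := hmono S (S ∪ {v}) Finset.subset_union_left; linarith
  have hk0 : 0 < (k : ℝ) := by
    have : (T \ S).card ≤ k := hk ▸ Finset.card_le_card (Finset.sdiff_subset)
    have hc := Finset.card_pos.mpr hne
    exact_mod_cast lt_of_lt_of_le hc this
  have hsum : ∑ w ∈ T \ S, (f (S ∪ {w}) - f S) ≤ (k : ℝ) * (f (S ∪ {v}) - f S) := by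
    calc ∑ w ∈ T \ S, (f (S ∪ {w}) - f S) ≤ ∑ _w ∈ T \ S, (f (S ∪ {v}) - f S) :=
          Finset.sum_le_sum fun w hw => hmax w hw
      _ = ((T \ S).card : ℝ) * (f (S ∪ {v}) - f S) := by rw [Finset.sum_const, nsmul_eq_mul]
      _ ≤ (k : ℝ) * (f (S ∪ {v}) - f S) := by
          apply mul_le_mul_of_nonneg_right _ hgv0
          exact_mod_cast hk ▸ Finset.card_le_card (Finset.sdiff_subset)
  rw [div_le_iff₀ hk0]
  calc f T - f S ≤ ∑ w ∈ T \ S, (f (S ∪ {w}) - f S) := by linarith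
    _ ≤ (k : ℝ) * (f (S ∪ {v}) - f S) := hsum
    _ = (f (S ∪ {v}) - f S) * (k : ℝ) := by ring
end
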